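/- Fix t > 0 with t not an integer, write t = T + τ where T = ⌊t⌋ is a nonnegative integer and τ ∈ (0, 1), and fix a > 0. Let n ∈ ℕ, y₁, …, yₙ ∈ ℝ, c₁, …, cₙ ∈ ℝ satisfy ∑_{j=1}^n c_j · y_j^ℓ = 0 for every integer ℓ with 0 ≤ ℓ ≤ T. Then −a · ∑_{j=1}^n ∑_{k=1}^n c_j · c_k · (y_j² + y_k²)^t = (−1)^T · a · (τ(τ+1)⋯(τ+T) / Γ(1 − τ)) · ∫₀^∞ ( ∑_{j=1}^n c_j · e^{−λ y_j²} )² · λ^{−(T + 1 + τ)} dλ, where the integral is with respect to Lebesgue measure on (0, ∞). -/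

import Mathlib

open Finset MeasureTheory Set Filter Topology

noncomputable def ET (T : ℕ) (x : ℝ) : ℝ :=
  Real.exp (-x) - ∑ m ∈ Finset.range (T + 1), (-x) ^ m / m.factorial

lemma ET_zero (T : ℕ) : ET T 0 = 0 := by
  simp [ET, Finset.sum_range_succ']

lemma ET_zero' : ∀ x, ET 0 x = Real.exp (-x) - 1 := by
  intro x; simp [ET]

lemma ET_continuous (T : ℕ) : Continuous (ET T) := by
  unfold ET
  fun_prop

lemma ET_hasDerivAt (T : ℕ) (x : ℝ) : HasDerivAt (ET (T + 1)) (-ET T x) x := by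
  have h1 : HasDerivAt (fun x : ℝ => Real.exp (-x)) (-Real.exp (-x)) x := by
    simpa using (hasDerivAt_neg x).exp
  have h2 : ∀ m : ℕ, HasDerivAt (fun x : ℝ => (-x) ^ m / m.factorial)
      ((m * (-x) ^ (m - 1) * (-1)) / m.factorial) x := by
    intro m
    exact (((hasDerivAt_pow m (-x)).comp x (hasDerivAt_neg x))).div_const _
  have hsum : HasDerivAt (fun x : ℝ => ∑ m ∈ Finset.range (T + 2), (-x) ^ m / m.factorial)
      (∑ m ∈ Finset.range (T + 2), (m * (-x) ^ (m - 1) * (-1)) / m.factorial) x :=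
    HasDerivAt.fun_sum (fun m _ => h2 m)
  have h := h1.sub hsum
  have key : -Real.exp (-x) - ∑ m ∈ Finset.range (T + 2), (m * (-x) ^ (m - 1) * (-1)) / m.factorial
      = -ET T x := by
    rw [Finset.sum_range_succ']
    simp only [ET, Nat.factorial_succ, Nat.cast_mul, Nat.cast_add, Nat.cast_one,
      Nat.add_sub_cancel, Nat.cast_zero, pow_zero, Nat.factorial_zero, Nat.cast_one]
    rw [neg_sub]
    have : ∀ i ∈ Finset.range (T + 1),
        ((i : ℝ) + 1) * (-x) ^ i * (-1) / ((i + 1) * i.factorial) = -((-x) ^ i / i.factorial) := by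
      intro i _
      have hi : ((i : ℝ) + 1) ≠ 0 := by positivity
      have hf : (i.factorial : ℝ) ≠ 0 := Nat.cast_ne_zero.mpr i.factorial_ne_zero
      field_simp
    rw [Finset.sum_congr rfl this]
    rw [Finset.sum_neg_distrib]
    ring
  exact key ▸ h

lemma ET_hasDerivAt_zero (x : ℝ) : HasDerivAt (ET 0) (-Real.exp (-x)) x := by
  have h1 : HasDerivAt (fun x : ℝ => Real.exp (-x)) (-Real.exp (-x)) x := by
    simpa using (hasDerivAt_neg x).exp
  have : ET 0 = fun x => Real.exp (-x) - 1 := funext ET_zero'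
  rw [this]
  simpa using h1.sub_const 1


lemma ET_abs_le (T : ℕ) : ∀ x : ℝ, 0 ≤ x → |ET T x| ≤ x ^ (T + 1) * Real.exp x := by
  induction T with
  | zero =>
    intro x hx
    have h1 : Real.exp (-x) ≤ 1 := Real.exp_le_one_iff.mpr (neg_nonpos.mpr hx)
    have h2 : 1 - x ≤ Real.exp (-x) := by
      have := Real.add_one_le_exp (-x); linarith
    have : |ET 0 x| = 1 - Real.exp (-x) := by
      rw [show ET 0 x = Real.exp (-x) - 1 by simp [ET], abs_sub_comm,
        abs_of_nonneg (by linarith)]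
    rw [this]
    have hx1 : (1 : ℝ) ≤ Real.exp x := Real.one_le_exp hx
    calc 1 - Real.exp (-x) ≤ x := by linarith
      _ ≤ x ^ (0 + 1) * Real.exp x := by
          rw [pow_one]; nlinarith
  | succ T ih =>
    intro x hx
    have hftc : ∫ s in (0:ℝ)..x, -ET T s = ET (T + 1) x - ET (T + 1) 0 := by
      apply intervalIntegral.integral_eq_sub_of_hasDerivAt
      · intro s _; exact ET_hasDerivAt T s
      · exact ((ET_continuous T).neg.intervalIntegrable 0 x)
    rw [ET_zero, sub_zero] at hftc
    have hbound : ∀ s ∈ Set.uIoc (0:ℝ) x, ‖-ET T s‖ ≤ x ^ (T + 1) * Real.exp x := by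
      intro s hs
      rw [Set.uIoc_of_le hx] at hs
      rw [norm_neg, Real.norm_eq_abs]
      calc |ET T s| ≤ s ^ (T + 1) * Real.exp s := ih s hs.1.le
        _ ≤ x ^ (T + 1) * Real.exp x := by
            have h1 : s ^ (T+1) ≤ x ^ (T+1) := pow_le_pow_left₀ hs.1.le hs.2 _
            have h2 : Real.exp s ≤ Real.exp x := Real.exp_le_exp.mpr hs.2
            have := Real.exp_pos s
            nlinarith [pow_nonneg hs.1.le (T+1)]
    have := intervalIntegral.norm_integral_le_of_norm_le_const hbound
    rw [hftc] at this
    rw [Real.norm_eq_abs] at this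
    calc |ET (T + 1) x| ≤ x ^ (T + 1) * Real.exp x * |x - 0| := this
      _ = x ^ (T + 2) * Real.exp x := by
          rw [sub_zero, abs_of_nonneg hx]; ring


lemma ET_abs_le' (T : ℕ) {x : ℝ} (hx : 1 ≤ x) : |ET T x| ≤ (T + 2) * x ^ T := by
  have hx0 : (0:ℝ) ≤ x := by linarith
  have hxT : (1:ℝ) ≤ x ^ T := one_le_pow₀ hx
  have h1 : |Real.exp (-x)| ≤ 1 := by
    rw [abs_of_nonneg (Real.exp_pos _).le]
    exact Real.exp_le_one_iff.mpr (by linarith)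
  have h2 : |∑ m ∈ Finset.range (T + 1), (-x) ^ m / m.factorial| ≤ (T + 1) * x ^ T := by
    calc |∑ m ∈ Finset.range (T + 1), (-x) ^ m / m.factorial|
        ≤ ∑ m ∈ Finset.range (T + 1), |(-x) ^ m / m.factorial| :=
          Finset.abs_sum_le_sum_abs _ _
      _ ≤ ∑ m ∈ Finset.range (T + 1), x ^ T := by
          apply Finset.sum_le_sum
          intro m hm
          rw [Finset.mem_range] at hm
          have : |(-x) ^ m / m.factorial| = x ^ m / m.factorial := by
            rw [abs_div, abs_pow, abs_neg, abs_of_nonneg hx0,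
              abs_of_nonneg (by positivity : (0:ℝ) ≤ (m.factorial : ℝ))]
          rw [this]
          have hf : (1:ℝ) ≤ m.factorial := by exact_mod_cast m.factorial_pos
          calc x ^ m / m.factorial ≤ x ^ m := by
                rw [div_le_iff₀ (by positivity)]
                nlinarith [pow_nonneg hx0 m]
            _ ≤ x ^ T := pow_le_pow_right₀ hx (by omega)
      _ = (T + 1) * x ^ T := by
          rw [Finset.sum_const, Finset.card_range]; push_cast; ring
  calc |ET T x| ≤ |Real.exp (-x)| + |∑ m ∈ Finset.range (T + 1), (-x) ^ m / m.factorial| :=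
        abs_sub _ _
    _ ≤ 1 + (T + 1) * x ^ T := by linarith
    _ ≤ (T + 2) * x ^ T := by nlinarith

lemma ET_integrable (T : ℕ) {e : ℝ} (h1 : -(T:ℝ) - 2 < e) (h2 : e < -(T:ℝ) - 1) :
    IntegrableOn (fun u => ET T u * u ^ e) (Set.Ioi (0:ℝ)) := by
  have hmeas : ∀ s : Set ℝ, s ⊆ Set.Ioi 0 → MeasurableSet s →
      AEStronglyMeasurable (fun u : ℝ => ET T u * u ^ e) (volume.restrict s) := by
    intro s hs hsm
    apply ContinuousOn.aestronglyMeasurable _ hsm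
    apply (ET_continuous T).continuousOn.mul
    apply ContinuousOn.rpow_const continuousOn_id
    intro x hx
    exact Or.inl (ne_of_gt (hs hx))
  rw [← Set.Ioc_union_Ioi_eq_Ioi (le_of_lt one_pos)]
  apply IntegrableOn.union
  · -- on Ioc 0 1 : bound by e * u ^ ((T+1)+e)
    have hint : IntegrableOn (fun u : ℝ => Real.exp 1 * u ^ ((T:ℝ) + 1 + e)) (Set.Ioc 0 1) := by
      apply Integrable.const_mul
      have h : IntervalIntegrable (fun u : ℝ => u ^ ((T:ℝ) + 1 + e)) volume 0 1 :=
        intervalIntegral.intervalIntegrable_rpow' (by linarith)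
      exact (intervalIntegrable_iff_integrableOn_Ioc_of_le (le_of_lt one_pos)).mp h
    apply hint.mono' (hmeas _ Set.Ioc_subset_Ioi_self measurableSet_Ioc)
    filter_upwards [ae_restrict_mem measurableSet_Ioc] with u hu
    have hu0 : (0:ℝ) < u := hu.1
    have hu1 : u ≤ 1 := hu.2
    rw [Real.norm_eq_abs, abs_mul, abs_of_nonneg (Real.rpow_nonneg hu0.le e)]
    have hb := ET_abs_le T u hu0.le
    have heu : Real.exp u ≤ Real.exp 1 := Real.exp_le_exp.mpr hu1
    calc |ET T u| * u ^ e ≤ u ^ (T + 1) * Real.exp 1 * u ^ e := by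
          have : |ET T u| ≤ u ^ (T+1) * Real.exp 1 := by nlinarith [pow_nonneg hu0.le (T+1)]
          nlinarith [Real.rpow_nonneg hu0.le e, abs_nonneg (ET T u)]
      _ = Real.exp 1 * u ^ ((T:ℝ) + 1 + e) := by
          rw [show ((T:ℝ) + 1 + e) = ((T+1:ℕ):ℝ) + e by push_cast; ring,
            Real.rpow_add hu0, Real.rpow_natCast]
          ring
  · -- on Ioi 1 : bound by (T+2) * u ^ ((T:ℝ) + e)
    have hint : IntegrableOn (fun u : ℝ => ((T:ℝ) + 2) * u ^ ((T:ℝ) + e)) (Set.Ioi 1) := by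
      apply Integrable.const_mul
      exact (integrableOn_Ioi_rpow_iff one_pos).mpr (by linarith)
    apply hint.mono' (hmeas _ (fun x hx => show (0:ℝ) < x from lt_trans one_pos (show (1:ℝ) < x from hx)) measurableSet_Ioi)
    filter_upwards [ae_restrict_mem measurableSet_Ioi] with u hu
    have hu1 : (1:ℝ) < u := hu
    have hu0 : (0:ℝ) < u := lt_trans one_pos hu1
    rw [Real.norm_eq_abs, abs_mul, abs_of_nonneg (Real.rpow_nonneg hu0.le e)]
    calc |ET T u| * u ^ e ≤ ((T:ℝ) + 2) * u ^ T * u ^ e := by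
          have := ET_abs_le' T hu1.le
          nlinarith [Real.rpow_nonneg hu0.le e, abs_nonneg (ET T u)]
      _ = ((T:ℝ) + 2) * u ^ ((T:ℝ) + e) := by
          rw [show ((T:ℝ) + e) = ((T:ℕ):ℝ) + e by push_cast; ring,
            Real.rpow_add hu0, Real.rpow_natCast]
          ring


lemma ET_tendsto_atTop (T : ℕ) {t : ℝ} (ht : (T : ℝ) < t) :
    Tendsto (fun u : ℝ => ET T u * u ^ (-t)) atTop (𝓝 0) := by
  apply squeeze_zero_norm' (a := fun u : ℝ => ((T : ℝ) + 2) * u ^ ((T : ℝ) - t))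
  · filter_upwards [eventually_ge_atTop (1:ℝ)] with u hu
    have hu0 : (0:ℝ) < u := lt_of_lt_of_le one_pos hu
    rw [Real.norm_eq_abs, abs_mul, abs_of_nonneg (Real.rpow_nonneg hu0.le _)]
    calc |ET T u| * u ^ (-t) ≤ ((T:ℝ) + 2) * u ^ T * u ^ (-t) := by
          have := ET_abs_le' T hu
          nlinarith [Real.rpow_nonneg hu0.le (-t), abs_nonneg (ET T u)]
      _ = ((T:ℝ) + 2) * u ^ ((T:ℝ) - t) := by
          rw [show ((T:ℝ) - t) = ((T:ℕ):ℝ) + (-t) by push_cast; ring,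
            Real.rpow_add hu0, Real.rpow_natCast]
          ring
  · rw [show (0:ℝ) = ((T:ℝ) + 2) * 0 by ring]
    apply Tendsto.const_mul
    rw [show ((T:ℝ) - t) = -(t - (T:ℝ)) by ring]
    exact tendsto_rpow_neg_atTop (by linarith)

lemma ET_cwa_zero (T : ℕ) {t : ℝ} (ht0 : 0 < t) (ht : t < (T : ℝ) + 1) :
    ContinuousWithinAt (fun u : ℝ => ET T u * u ^ (-t)) (Set.Ici 0) 0 := by
  rw [ContinuousWithinAt, show ET T 0 * (0:ℝ) ^ (-t) = 0 by simp [ET_zero]]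
  apply squeeze_zero_norm' (a := fun u : ℝ => Real.exp u * u ^ ((T : ℝ) + 1 - t))
  · filter_upwards [self_mem_nhdsWithin] with u (hu : (0:ℝ) ≤ u)
    rcases eq_or_lt_of_le hu with h | hu0
    · simp [← h, ET_zero, Real.zero_rpow (by linarith : (T:ℝ) + 1 - t ≠ 0)]
    rw [Real.norm_eq_abs, abs_mul, abs_of_nonneg (Real.rpow_nonneg hu0.le _)]
    calc |ET T u| * u ^ (-t) ≤ u ^ (T + 1) * Real.exp u * u ^ (-t) := by
          have := ET_abs_le T u hu0.le
          nlinarith [Real.rpow_nonneg hu0.le (-t), abs_nonneg (ET T u)]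
      _ = Real.exp u * u ^ ((T:ℝ) + 1 - t) := by
          rw [show ((T:ℝ) + 1 - t) = ((T+1:ℕ):ℝ) + (-t) by push_cast; ring,
            Real.rpow_add hu0, Real.rpow_natCast]
          ring
  · have h1 : Tendsto (fun u : ℝ => Real.exp u * u ^ ((T : ℝ) + 1 - t)) (𝓝 0)
        (𝓝 (Real.exp 0 * (0:ℝ) ^ ((T:ℝ) + 1 - t))) := by
      apply Tendsto.mul
      · exact Real.continuous_exp.continuousAt
      · exact (Real.continuousAt_rpow_const 0 _ (Or.inr (by linarith))).tendsto
    rw [Real.exp_zero, Real.zero_rpow (by linarith : (T:ℝ) + 1 - t ≠ 0), one_mul] at h1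
    exact h1.mono_left nhdsWithin_le_nhds


lemma KT_val {τ : ℝ} (hτ0 : 0 < τ) (hτ1 : τ < 1) : ∀ T : ℕ,
    ∫ u in Set.Ioi (0:ℝ), ET T u * u ^ (-((T:ℝ) + τ) - 1)
      = (-1) ^ (T + 1) * Real.Gamma (1 - τ) / ∏ i ∈ Finset.range (T + 1), (τ + i) := by
  intro T
  induction T with
  | zero =>
    have he : -(((0:ℕ):ℝ) + τ) - 1 = -τ - 1 := by push_cast; ring
    rw [he]
    have hA : IntegrableOn (fun x : ℝ => Real.exp (-x) * x ^ (-τ)) (Set.Ioi 0) := by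
      have := Real.GammaIntegral_convergent (s := 1 - τ) (by linarith)
      simpa [show (1:ℝ) - τ - 1 = -τ by ring] using this
    have hB : IntegrableOn (fun x : ℝ => ET 0 x * x ^ (-τ - 1)) (Set.Ioi 0) :=
      ET_integrable 0 (by push_cast; linarith) (by push_cast; linarith)
    have hderiv : ∀ x ∈ Set.Ioi (0:ℝ), HasDerivAt (fun u => ET 0 u * u ^ (-τ))
        (-(Real.exp (-x) * x ^ (-τ)) + (-τ) * (ET 0 x * x ^ (-τ - 1))) x := by
      intro x hx
      have h := (ET_hasDerivAt_zero x).mul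
        (Real.hasDerivAt_rpow_const (x := x) (p := -τ) (Or.inl (ne_of_gt hx)))
      convert h using 1
      · rfl
      · rfl
      · rfl
      rw [show -τ - 1 = -τ - 1 from rfl]
      ring_nf
    have hA' : IntegrableOn (fun x : ℝ => -(Real.exp (-x) * x ^ (-τ))) (Set.Ioi 0) := hA.neg
    have hB' : IntegrableOn (fun x : ℝ => (-τ) * (ET 0 x * x ^ (-τ - 1))) (Set.Ioi 0) :=
      hB.const_mul (-τ)
    have h0 := integral_Ioi_of_hasDerivAt_of_tendsto
      (ET_cwa_zero 0 hτ0 (by norm_num; linarith)) hderiv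
      (hA'.add hB')
      (ET_tendsto_atTop 0 (by exact_mod_cast hτ0))
    rw [show ET 0 0 * (0:ℝ) ^ (-τ) = 0 by simp [ET_zero], sub_zero] at h0
    rw [integral_add hA' hB', integral_neg, integral_const_mul] at h0
    have hGamma : ∫ x in Set.Ioi (0:ℝ), Real.exp (-x) * x ^ (-τ) = Real.Gamma (1 - τ) := by
      rw [Real.Gamma_eq_integral (by linarith : (0:ℝ) < 1 - τ)]
      congr 1
      ext x
      rw [show (1:ℝ) - τ - 1 = -τ by ring]
    rw [hGamma] at h0
    have hτne : τ ≠ 0 := ne_of_gt hτ0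
    rw [show ∏ i ∈ Finset.range (0 + 1), (τ + (i:ℝ)) = τ by simp, pow_one]
    rw [eq_div_iff hτne]
    linarith
  | succ T ih =>
    set t : ℝ := (T:ℝ) + 1 + τ with htdef
    have he : -((((T:ℕ)+1 : ℕ) : ℝ) + τ) - 1 = -t - 1 := by push_cast; ring
    rw [he]
    have hA : IntegrableOn (fun x : ℝ => ET T x * x ^ (-t)) (Set.Ioi 0) :=
      ET_integrable T (by push_cast; linarith) (by push_cast; linarith)
    have hB : IntegrableOn (fun x : ℝ => ET (T+1) x * x ^ (-t - 1)) (Set.Ioi 0) :=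
      ET_integrable (T+1) (by push_cast; linarith) (by push_cast; linarith)
    have hderiv : ∀ x ∈ Set.Ioi (0:ℝ), HasDerivAt (fun u => ET (T+1) u * u ^ (-t))
        (-(ET T x * x ^ (-t)) + (-t) * (ET (T+1) x * x ^ (-t - 1))) x := by
      intro x hx
      have h := (ET_hasDerivAt T x).mul
        (Real.hasDerivAt_rpow_const (x := x) (p := -t) (Or.inl (ne_of_gt hx)))
      convert h using 1
      · rfl
      · rfl
      · rfl
      ring_nf
    have hA' : IntegrableOn (fun x : ℝ => -(ET T x * x ^ (-t))) (Set.Ioi 0) := hA.neg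
    have hB' : IntegrableOn (fun x : ℝ => (-t) * (ET (T+1) x * x ^ (-t - 1))) (Set.Ioi 0) :=
      hB.const_mul (-t)
    have h0 := integral_Ioi_of_hasDerivAt_of_tendsto
      (ET_cwa_zero (T+1) (by push_cast; linarith) (by push_cast; linarith)) hderiv
      (hA'.add hB')
      (ET_tendsto_atTop (T+1) (by push_cast; linarith))
    rw [show ET (T+1) 0 * (0:ℝ) ^ (-t) = 0 by simp [ET_zero], sub_zero] at h0
    rw [integral_add hA' hB', integral_neg, integral_const_mul] at h0
    have hih : ∫ x in Set.Ioi (0:ℝ), ET T x * x ^ (-t)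
        = (-1) ^ (T + 1) * Real.Gamma (1 - τ) / ∏ i ∈ Finset.range (T + 1), (τ + i) := by
      rw [show -t = -((T:ℝ) + τ) - 1 by rw [htdef]; ring]
      exact ih
    rw [hih] at h0
    have hprodpos : (0:ℝ) < ∏ i ∈ Finset.range (T + 1), (τ + i) := by
      apply Finset.prod_pos
      intro i _
      positivity
    have htpos : (0:ℝ) < t := by rw [htdef]; positivity
    have hPne : (∏ i ∈ Finset.range (T + 1), (τ + (i:ℝ))) ≠ 0 := ne_of_gt hprodpos
    have htne : t ≠ 0 := ne_of_gt htpos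
    have hI : ∫ x in Set.Ioi (0:ℝ), ET (T+1) x * x ^ (-t - 1)
        = -((-1) ^ (T + 1) * Real.Gamma (1 - τ) / ∏ i ∈ Finset.range (T + 1), (τ + (i:ℝ))) / t := by
      field_simp at h0 ⊢
      linarith
    rw [hI, show ∏ i ∈ Finset.range (T+1+1), (τ + (i:ℝ))
        = (∏ i ∈ Finset.range (T+1), (τ + (i:ℝ))) * t from by
          rw [Finset.prod_range_succ, htdef]; push_cast; ring,
      pow_succ]
    field_simp
    ring_nf


lemma ET_scale_eq (T : ℕ) (t : ℝ) {s : ℝ} (hs0 : 0 < s) {l : ℝ} (hl0 : 0 < l) :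
    (ET T (s * l) * (s * l) ^ (-t - 1)) * s ^ (t + 1) = ET T (s * l) * l ^ (-t - 1) := by
  rw [Real.mul_rpow hs0.le hl0.le]
  have : s ^ (-t - 1) * s ^ (t + 1) = 1 := by
    rw [← Real.rpow_add hs0]
    norm_num
  calc ET T (s * l) * (s ^ (-t - 1) * l ^ (-t - 1)) * s ^ (t + 1)
      = ET T (s * l) * l ^ (-t - 1) * (s ^ (-t - 1) * s ^ (t + 1)) := by ring
    _ = ET T (s * l) * l ^ (-t - 1) := by rw [this, mul_one]

lemma ET_scaled_integrable (T : ℕ) {t : ℝ} (h1 : (T:ℝ) < t) (h2 : t < (T:ℝ) + 1) {s : ℝ}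
    (hs : 0 ≤ s) :
    IntegrableOn (fun l => ET T (s * l) * l ^ (-t - 1)) (Set.Ioi (0:ℝ)) := by
  rcases eq_or_lt_of_le hs with rfl | hs0
  · apply (integrableOn_zero (s := Set.Ioi (0:ℝ))).congr_fun _ measurableSet_Ioi
    intro l _
    simp [ET_zero]
  · have hg : IntegrableOn (fun u => (ET T u * u ^ (-t - 1)) * s ^ (t + 1)) (Set.Ioi (0:ℝ)) :=
      (ET_integrable T (by linarith) (by linarith)).mul_const _
    have hcomp : IntegrableOn (fun l => (ET T (s * l) * (s * l) ^ (-t - 1)) * s ^ (t + 1))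
        (Set.Ioi (0:ℝ)) := by
      have h := (integrableOn_Ioi_comp_mul_left_iff
        (fun u => (ET T u * u ^ (-t - 1)) * s ^ (t + 1)) 0 hs0).mpr
      rw [mul_zero] at h
      exact h hg
    apply hcomp.congr_fun _ measurableSet_Ioi
    intro l hl
    exact ET_scale_eq T t hs0 hl

lemma ET_scaled_integral (T : ℕ) {t : ℝ} (h1 : (T:ℝ) < t) (h2 : t < (T:ℝ) + 1) {s : ℝ}
    (hs : 0 ≤ s) :
    ∫ l in Set.Ioi (0:ℝ), ET T (s * l) * l ^ (-t - 1)
      = s ^ t * ∫ u in Set.Ioi (0:ℝ), ET T u * u ^ (-t - 1) := by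
  have ht0 : 0 < t := lt_of_le_of_lt (Nat.cast_nonneg T) h1
  rcases eq_or_lt_of_le hs with rfl | hs0
  · simp [ET_zero, Real.zero_rpow (ne_of_gt ht0)]
  · have step1 : ∫ l in Set.Ioi (0:ℝ), ET T (s * l) * l ^ (-t - 1)
        = ∫ l in Set.Ioi (0:ℝ), (ET T (s * l) * (s * l) ^ (-t - 1)) * s ^ (t + 1) := by
      apply setIntegral_congr_fun measurableSet_Ioi
      intro l hl
      exact (ET_scale_eq T t hs0 hl).symm
    rw [step1]
    have step2 := integral_comp_mul_left_Ioi
      (fun u => (ET T u * u ^ (-t - 1)) * s ^ (t + 1)) 0 hs0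
    rw [mul_zero] at step2
    rw [step2, smul_eq_mul, integral_mul_const]
    have : s⁻¹ * s ^ (t + 1) = s ^ t := by
      rw [← Real.rpow_neg_one s, ← Real.rpow_add hs0]
      norm_num
    rw [← this]
    ring


lemma moment_vanish {n T : ℕ} {y c : Fin n → ℝ}
    (hmom : ∀ ℓ : ℕ, ℓ ≤ T → ∑ j, c j * y j ^ ℓ = 0) {m : ℕ} (hm : m ≤ T) :
    ∑ j, ∑ k, c j * c k * ((y j ^ 2 + y k ^ 2) ^ m) = 0 := by
  have expand : ∀ j k : Fin n, c j * c k * ((y j ^ 2 + y k ^ 2) ^ m)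
      = ∑ i ∈ Finset.range (m + 1),
          (c j * y j ^ (2 * i)) * ((c k * y k ^ (2 * (m - i))) * (m.choose i : ℝ)) := by
    intro j k
    rw [add_pow, Finset.mul_sum]
    apply Finset.sum_congr rfl
    intro i _
    rw [pow_mul, pow_mul]
    ring
  calc ∑ j, ∑ k, c j * c k * ((y j ^ 2 + y k ^ 2) ^ m)
      = ∑ j, ∑ i ∈ Finset.range (m + 1), ∑ k,
          (c j * y j ^ (2 * i)) * ((c k * y k ^ (2 * (m - i))) * (m.choose i : ℝ)) := by
        apply Finset.sum_congr rfl
        intro j _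
        rw [Finset.sum_congr rfl (fun k _ => expand j k)]
        exact Finset.sum_comm
    _ = ∑ i ∈ Finset.range (m + 1), ∑ j, ∑ k,
          (c j * y j ^ (2 * i)) * ((c k * y k ^ (2 * (m - i))) * (m.choose i : ℝ)) :=
        Finset.sum_comm
    _ = ∑ i ∈ Finset.range (m + 1),
          (∑ j, c j * y j ^ (2 * i)) * ((∑ k, c k * y k ^ (2 * (m - i))) * (m.choose i : ℝ)) := by
        apply Finset.sum_congr rfl
        intro i _
        rw [Finset.sum_mul]
        apply Finset.sum_congr rfl
        intro j _
        rw [← Finset.mul_sum, Finset.sum_mul]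
    _ = 0 := by
        apply Finset.sum_eq_zero
        intro i hi
        rw [Finset.mem_range] at hi
        rcases le_or_gt (2 * i) T with h | h
        · rw [hmom _ h, zero_mul]
        · rw [hmom _ (by omega : 2 * (m - i) ≤ T), zero_mul, mul_zero]

lemma sq_expand {n T : ℕ} {y c : Fin n → ℝ}
    (hmom : ∀ ℓ : ℕ, ℓ ≤ T → ∑ j, c j * y j ^ ℓ = 0) (l : ℝ) :
    (∑ j, c j * Real.exp (-l * y j ^ 2)) ^ 2
      = ∑ j, ∑ k, c j * c k * ET T ((y j ^ 2 + y k ^ 2) * l) := by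
  have hET : ∀ j k : Fin n, c j * c k * ET T ((y j ^ 2 + y k ^ 2) * l)
      = (c j * Real.exp (-l * y j ^ 2)) * (c k * Real.exp (-l * y k ^ 2))
        - ∑ i ∈ Finset.range (T + 1),
            ((-l) ^ i / i.factorial) * (c j * c k * ((y j ^ 2 + y k ^ 2) ^ i)) := by
    intro j k
    unfold ET
    rw [mul_sub, Finset.mul_sum]
    congr 1
    · rw [show -((y j ^ 2 + y k ^ 2) * l) = (-l * y j ^ 2) + (-l * y k ^ 2) by ring,
        Real.exp_add]
      ring
    · apply Finset.sum_congr rfl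
      intro i _
      rw [show -((y j ^ 2 + y k ^ 2) * l) = (-l) * (y j ^ 2 + y k ^ 2) by ring,
        mul_pow]
      ring
  simp_rw [hET, Finset.sum_sub_distrib]
  have h1 : ∑ j, ∑ k, (c j * Real.exp (-l * y j ^ 2)) * (c k * Real.exp (-l * y k ^ 2))
      = (∑ j, c j * Real.exp (-l * y j ^ 2)) ^ 2 := by
    rw [sq, Finset.sum_mul_sum]
  have h2 : ∑ j, ∑ k, (∑ i ∈ Finset.range (T + 1),
      ((-l) ^ i / i.factorial) * (c j * c k * ((y j ^ 2 + y k ^ 2) ^ i))) = 0 := by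
    calc ∑ j, ∑ k, (∑ i ∈ Finset.range (T + 1),
          ((-l) ^ i / i.factorial) * (c j * c k * ((y j ^ 2 + y k ^ 2) ^ i)))
        = ∑ i ∈ Finset.range (T + 1), ∑ j, ∑ k,
            ((-l) ^ i / i.factorial) * (c j * c k * ((y j ^ 2 + y k ^ 2) ^ i)) := by
          rw [Finset.sum_congr rfl (fun j (_ : j ∈ Finset.univ) => Finset.sum_comm)]
          exact Finset.sum_comm
      _ = ∑ i ∈ Finset.range (T + 1), ((-l) ^ i / i.factorial)
            * (∑ j, ∑ k, c j * c k * ((y j ^ 2 + y k ^ 2) ^ i)) := by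
          apply Finset.sum_congr rfl
          intro i _
          rw [Finset.mul_sum]
          apply Finset.sum_congr rfl
          intro j _
          rw [Finset.mul_sum]
      _ = 0 := by
          apply Finset.sum_eq_zero
          intro i hi
          rw [Finset.mem_range] at hi
          rw [moment_vanish hmom (by omega), mul_zero]
  rw [h1, h2, sub_zero]

/-- Fix noninteger `t > 0` written `t = T + τ`, `T = ⌊t⌋`, `τ ∈ (0,1)`,
and `a > 0`. If `∑_j c_j y_j^ℓ = 0` for all `0 ≤ ℓ ≤ T`, then
`−a ∑_{j,k} c_j c_k (y_j² + y_k²)^t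
 = (−1)^T a (τ(τ+1)⋯(τ+T)/Γ(1−τ)) ∫₀^∞ (∑_j c_j e^{−λ y_j²})² λ^{−(T+1+τ)} dλ`. -/
theorem stmt15 (t : ℝ) (ht : 0 < t) (T : ℕ) (τ : ℝ) (hτ : τ ∈ Set.Ioo (0 : ℝ) 1)
    (htsum : t = (T : ℝ) + τ) (a : ℝ) (ha : 0 < a)
    (n : ℕ) (y c : Fin n → ℝ)
    (hmom : ∀ ℓ : ℕ, ℓ ≤ T → ∑ j, c j * y j ^ ℓ = 0) :
    -a * ∑ j, ∑ k, c j * c k * (((y j) ^ 2 + (y k) ^ 2 : ℝ) ^ t)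
      = (-1 : ℝ) ^ T * a * ((∏ i ∈ Finset.range (T + 1), (τ + i)) / Real.Gamma (1 - τ)) *
        ∫ l in Set.Ioi (0 : ℝ),
          (∑ j, c j * Real.exp (-l * (y j) ^ 2)) ^ 2 * l ^ (-((T : ℝ) + 1 + τ)) := by
  obtain ⟨hτ0, hτ1⟩ := hτ
  have ht1 : (T : ℝ) < t := by rw [htsum]; linarith
  have ht2 : t < (T : ℝ) + 1 := by rw [htsum]; linarith
  have hGpos : 0 < Real.Gamma (1 - τ) := Real.Gamma_pos_of_pos (by linarith)
  have hPpos : (0:ℝ) < ∏ i ∈ Finset.range (T + 1), (τ + i) :=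
    Finset.prod_pos (fun i _ => by positivity)
  have hexp : -((T : ℝ) + 1 + τ) = -t - 1 := by rw [htsum]; ring
  rw [hexp]
  have hsnn : ∀ j k : Fin n, (0:ℝ) ≤ y j ^ 2 + y k ^ 2 := fun j k => by positivity
  have hint : ∀ j k : Fin n, IntegrableOn
      (fun l => c j * c k * (ET T ((y j ^ 2 + y k ^ 2) * l) * l ^ (-t - 1)))
      (Set.Ioi (0:ℝ)) :=
    fun j k => ((ET_scaled_integrable T ht1 ht2 (hsnn j k)).const_mul _)
  have hIeq : ∫ l in Set.Ioi (0:ℝ), (∑ j, c j * Real.exp (-l * y j ^ 2)) ^ 2 * l ^ (-t - 1)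
      = ∑ j, ∑ k, c j * c k * ((y j ^ 2 + y k ^ 2) ^ t *
          ∫ u in Set.Ioi (0:ℝ), ET T u * u ^ (-t - 1)) := by
    calc ∫ l in Set.Ioi (0:ℝ), (∑ j, c j * Real.exp (-l * y j ^ 2)) ^ 2 * l ^ (-t - 1)
        = ∫ l in Set.Ioi (0:ℝ), ∑ j, ∑ k,
            c j * c k * (ET T ((y j ^ 2 + y k ^ 2) * l) * l ^ (-t - 1)) := by
          apply setIntegral_congr_fun measurableSet_Ioi
          intro l _
          dsimp only
          rw [sq_expand hmom l, Finset.sum_mul]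
          apply Finset.sum_congr rfl; intro j _
          rw [Finset.sum_mul]
          apply Finset.sum_congr rfl; intro k _
          ring
      _ = ∑ j, ∑ k, ∫ l in Set.Ioi (0:ℝ),
            c j * c k * (ET T ((y j ^ 2 + y k ^ 2) * l) * l ^ (-t - 1)) := by
          rw [integral_finset_sum _ (fun j _ => integrable_finset_sum _ (fun k _ => hint j k))]
          exact Finset.sum_congr rfl (fun j _ => integral_finset_sum _ (fun k _ => hint j k))
      _ = ∑ j, ∑ k, c j * c k * ((y j ^ 2 + y k ^ 2) ^ t *
            ∫ u in Set.Ioi (0:ℝ), ET T u * u ^ (-t - 1)) := by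
          apply Finset.sum_congr rfl; intro j _
          apply Finset.sum_congr rfl; intro k _
          rw [integral_const_mul, ET_scaled_integral T ht1 ht2 (hsnn j k)]
  rw [hIeq]
  have hI0 : ∫ u in Set.Ioi (0:ℝ), ET T u * u ^ (-t - 1)
      = (-1) ^ (T + 1) * Real.Gamma (1 - τ) / ∏ i ∈ Finset.range (T + 1), (τ + i) := by
    have h := KT_val hτ0 hτ1 T
    rw [show -((T:ℝ) + τ) - 1 = -t - 1 from by rw [htsum]] at h
    exact h
  have hfact : ∑ j, ∑ k, c j * c k * ((y j ^ 2 + y k ^ 2) ^ t *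
        ∫ u in Set.Ioi (0:ℝ), ET T u * u ^ (-t - 1))
      = (∫ u in Set.Ioi (0:ℝ), ET T u * u ^ (-t - 1)) *
          ∑ j, ∑ k, c j * c k * ((y j ^ 2 + y k ^ 2) ^ t) := by
    rw [Finset.mul_sum]
    apply Finset.sum_congr rfl; intro j _
    rw [Finset.mul_sum]
    apply Finset.sum_congr rfl; intro k _
    ring
  rw [hfact, hI0]
  have h1 : ((-1:ℝ)) ^ T * ((-1:ℝ)) ^ (T + 1) = -1 :=
    by rw [← pow_add]; exact Odd.neg_one_pow ⟨T, by ring⟩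
  have h2 : ((∏ i ∈ Finset.range (T + 1), (τ + (i:ℝ))) / Real.Gamma (1 - τ))
      * (Real.Gamma (1 - τ) / ∏ i ∈ Finset.range (T + 1), (τ + (i:ℝ))) = 1 := by
    field_simp
  calc -a * ∑ j, ∑ k, c j * c k * ((y j ^ 2 + y k ^ 2) ^ t)
      = (((-1:ℝ)) ^ T * ((-1:ℝ)) ^ (T + 1)) * a
        * (((∏ i ∈ Finset.range (T + 1), (τ + (i:ℝ))) / Real.Gamma (1 - τ))
            * (Real.Gamma (1 - τ) / ∏ i ∈ Finset.range (T + 1), (τ + (i:ℝ))))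
        * ∑ j, ∑ k, c j * c k * ((y j ^ 2 + y k ^ 2) ^ t) := by
        rw [h1, h2]; ring
    _ = (-1 : ℝ) ^ T * a * ((∏ i ∈ Finset.range (T + 1), (τ + i)) / Real.Gamma (1 - τ)) *
        ((-1) ^ (T + 1) * Real.Gamma (1 - τ) / (∏ i ∈ Finset.range (T + 1), (τ + i)) *
          ∑ j, ∑ k, c j * c k * ((y j ^ 2 + y k ^ 2) ^ t)) := by
        ring
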